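/- For k ≥ 1, the PLRS generated by [1,...,1 (k ones), 0, 4] is incomplete; specifically it fails Brown's criterion first at the (2k+3)rd term: H_{2k+3} > 1 + Σ_{i=1}^{2k+2} H_i, while H_{n+1} ≤ 1 + Σ_{i≤n} H_i for all n ≤ 2k+1. -/

import Mathlib

/-- A sequence of positive integers (indexed from 1) is complete if every positive
integer is a sum of distinct terms (each index used at most once). -/
def SeqComplete (a : ℕ → ℕ) : Prop :=
  ∀ N : ℕ, 0 < N → ∃ s : Finset ℕ, (∀ i ∈ s, 1 ≤ i) ∧ ∑ i ∈ s, a i = N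

/-- `H` is the positive linear recurrence sequence (PLRS) with coefficients
`c 1, …, c L` (indexed from 1). -/
def IsPLRS (L : ℕ) (c : ℕ → ℕ) (H : ℕ → ℕ) : Prop :=
  H 1 = 1 ∧
  (∀ n, 1 ≤ n → n < L → H (n + 1) = (∑ i ∈ Finset.Icc 1 n, c i * H (n + 1 - i)) + 1) ∧
  (∀ n, L ≤ n → H (n + 1) = ∑ i ∈ Finset.Icc 1 L, c i * H (n + 1 - i))

private lemma sum_refl_aux (f : ℕ → ℕ) (a b n : ℕ) (hb : b ≤ n) :
    ∑ i ∈ Finset.Icc a b, f (n + 1 - i) = ∑ j ∈ Finset.Icc (n + 1 - b) (n + 1 - a), f j := by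
  refine Finset.sum_nbij' (fun i => n + 1 - i) (fun j => n + 1 - j) ?_ ?_ ?_ ?_ ?_
  all_goals intro x hx
  all_goals simp only [Finset.mem_Icc] at hx ⊢
  all_goals omega

theorem k_ones_zero_four_incomplete (k : ℕ) (hk : 1 ≤ k) (H : ℕ → ℕ)
    (h : IsPLRS (k + 2) (fun i => if i ≤ k then 1 else if i = k + 2 then 4 else 0) H) :
    ¬ SeqComplete H ∧
      H (2 * k + 3) > 1 + ∑ i ∈ Finset.Icc 1 (2 * k + 2), H i ∧
      ∀ n, 1 ≤ n → n ≤ 2 * k + 1 → H (n + 1) ≤ 1 + ∑ i ∈ Finset.Icc 1 n, H i := by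
  obtain ⟨h1, h2, h3⟩ := h
  have hIO : ∀ m : ℕ, Finset.Icc 1 m = Finset.Ioc 0 m := fun m => rfl
  -- short recurrence for n ≤ k
  have hrec1 : ∀ n, 1 ≤ n → n ≤ k → H (n + 1) = (∑ i ∈ Finset.Icc 1 n, H i) + 1 := by
    intro n hn1 hnk
    rw [h2 n hn1 (by omega)]
    beta_reduce
    congr 1
    rw [Finset.sum_congr rfl (fun i hi => by
        simp only [Finset.mem_Icc] at hi
        rw [if_pos (by omega : i ≤ k), one_mul]),
      sum_refl_aux H 1 n n le_rfl,
      show n + 1 - n = 1 from by omega, Nat.add_sub_cancel]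
  -- partial sums up to k+1
  have Ssum : ∀ n, n ≤ k + 1 → (∑ i ∈ Finset.Icc 1 n, H i) = 2 ^ n - 1 := by
    intro n
    induction n with
    | zero => intro _; simp
    | succ m ih =>
      intro hm
      rw [Finset.sum_Icc_succ_top (by omega : 1 ≤ m + 1)]
      rcases Nat.eq_zero_or_pos m with h0 | hpos
      · subst h0; simp [h1]
      · rw [ih (by omega), hrec1 m hpos (by omega), ih (by omega), pow_succ]
        have : 1 ≤ 2 ^ m := Nat.one_le_two_pow
        omega
  -- values up to k+1
  have hval : ∀ j, 1 ≤ j → j ≤ k + 1 → H j = 2 ^ (j - 1) := by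
    intro j hj1 hj2
    rcases Nat.eq_or_lt_of_le hj1 with hj | hj
    · rw [← hj, h1]; rfl
    · obtain ⟨m, rfl⟩ : ∃ m, j = m + 1 := ⟨j - 1, by omega⟩
      rw [hrec1 m (by omega) (by omega), Ssum m (by omega)]
      have : 1 ≤ 2 ^ m := Nat.one_le_two_pow
      simp only [Nat.add_sub_cancel]
      omega
  -- value at k+2
  have hk2 : H (k + 2) = 2 ^ (k + 1) - 1 := by
    have hh := h2 (k + 1) (by omega) (by omega)
    beta_reduce at hh
    rw [Finset.sum_Icc_succ_top (by omega : 1 ≤ k + 1)] at hh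
    rw [if_neg (by omega : ¬ (k + 1 ≤ k)), if_neg (by omega : ¬ (k + 1 = k + 2)),
      zero_mul, add_zero] at hh
    rw [Finset.sum_congr rfl (fun i hi => by
        simp only [Finset.mem_Icc] at hi
        rw [if_pos (by omega : i ≤ k), one_mul]),
      sum_refl_aux H 1 k (k + 1) (by omega)] at hh
    rw [show k + 1 + 1 - k = 1 + 1 from by omega, show k + 1 + 1 - 1 = k + 1 from by omega,
      Finset.Icc_add_one_left_eq_Ioc] at hh
    have hsplit := Finset.sum_Ioc_consecutive H (by omega : (0:ℕ) ≤ 1) (by omega : 1 ≤ k + 1)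
    have hIoc : ∑ i ∈ Finset.Ioc 0 (k + 1), H i = 2 ^ (k + 1) - 1 := by
      rw [← hIO]; exact Ssum (k + 1) le_rfl
    have h01 : ∑ i ∈ Finset.Ioc 0 1, H i = 1 := by
      rw [← hIO]; simp [h1]
    rw [show k + 1 + 1 = k + 2 from rfl] at hh
    have : 1 ≤ 2 ^ (k + 1) := Nat.one_le_two_pow
    omega
  -- long recurrence
  have hlong : ∀ n, k + 2 ≤ n →
      H (n + 1) = (∑ j ∈ Finset.Ioc (n - k) n, H j) + 4 * H (n - k - 1) := by
    intro n hn
    rw [h3 n hn]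
    beta_reduce
    rw [show k + 2 = k + 1 + 1 from rfl, Finset.sum_Icc_succ_top (by omega : 1 ≤ k + 1 + 1),
      Finset.sum_Icc_succ_top (by omega : 1 ≤ k + 1)]
    rw [if_neg (by omega : ¬ (k + 1 ≤ k)), if_neg (by omega : ¬ (k + 1 = k + 1 + 1)),
      zero_mul, add_zero, if_neg (by omega : ¬ (k + 1 + 1 ≤ k)), if_pos rfl]
    congr 1
    · rw [Finset.sum_congr rfl (fun i hi => by
          simp only [Finset.mem_Icc] at hi
          rw [if_pos (by omega : i ≤ k), one_mul]),
        sum_refl_aux H 1 k n (by omega),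
        show n + 1 - k = (n - k) + 1 from by omega, Finset.Icc_add_one_left_eq_Ioc, Nat.add_sub_cancel]
    · have he : n + 1 - (k + 1 + 1) = n - k - 1 := by omega
      rw [he]
  -- Brown's criterion holds for n ≤ 2k+1
  have brown : ∀ n, 1 ≤ n → n ≤ 2 * k + 1 → H (n + 1) ≤ 1 + ∑ i ∈ Finset.Icc 1 n, H i := by
    intro n hn1 hn2
    rcases le_or_gt n k with hcase | hcase
    · rw [hrec1 n hn1 hcase]; omega
    · rcases eq_or_lt_of_le (Nat.succ_le_of_lt hcase) with hcase' | hcase'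
      · -- n = k + 1
        have : n = k + 1 := by omega
        subst this
        rw [show k + 1 + 1 = k + 2 from rfl, hk2, Ssum (k + 1) le_rfl]
        have : 1 ≤ 2 ^ (k + 1) := Nat.one_le_two_pow
        omega
      · -- k + 2 ≤ n ≤ 2k + 1
        rw [hlong n (by omega)]
        have hsplit := Finset.sum_Ioc_consecutive H (by omega : (0:ℕ) ≤ n - k) (by omega : n - k ≤ n)
        have hS1 : ∑ i ∈ Finset.Ioc 0 (n - k), H i = 2 ^ (n - k) - 1 := by
          rw [← hIO]; exact Ssum (n - k) (by omega)
        have hS : ∑ i ∈ Finset.Icc 1 n, H i = ∑ i ∈ Finset.Ioc 0 n, H i := by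
          rw [hIO]
        obtain ⟨m, hm⟩ : ∃ m, n - k = m + 2 := ⟨n - k - 2, by omega⟩
        have hH : 4 * H (n - k - 1) = 2 ^ (n - k) := by
          rw [hval (n - k - 1) (by omega) (by omega),
            show n - k - 1 - 1 = m from by omega, hm, pow_add]
          ring
        rw [hS, hH]
        have : 1 ≤ 2 ^ (n - k) := Nat.one_le_two_pow
        omega
  -- failure at 2k+2
  have hfail : H (2 * k + 3) > 1 + ∑ i ∈ Finset.Icc 1 (2 * k + 2), H i := by
    have hl := hlong (2 * k + 2) (by omega)
    rw [show 2 * k + 2 - k - 1 = k + 1 from by omega, show 2 * k + 2 - k = k + 2 from by omega,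
      show 2 * k + 2 + 1 = 2 * k + 3 from rfl] at hl
    have hsplit := Finset.sum_Ioc_consecutive H (by omega : (0:ℕ) ≤ k + 2) (by omega : k + 2 ≤ 2 * k + 2)
    have hS2 : ∑ i ∈ Finset.Ioc 0 (k + 2), H i = 2 ^ (k + 2) - 2 := by
      rw [← hIO, show k + 2 = (k + 1) + 1 from rfl,
        Finset.sum_Icc_succ_top (by omega : 1 ≤ k + 1 + 1), Ssum (k + 1) le_rfl,
        show (k + 1) + 1 = k + 2 from rfl, hk2, show k + 2 = (k + 1) + 1 from rfl, pow_succ]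
      have : 1 ≤ 2 ^ (k + 1) := Nat.one_le_two_pow
      omega
    have hS : ∑ i ∈ Finset.Icc 1 (2 * k + 2), H i = ∑ i ∈ Finset.Ioc 0 (2 * k + 2), H i := by
      rw [hIO]
    have hH : 4 * H (k + 1) = 2 ^ (k + 2) := by
      rw [hval (k + 1) (by omega) le_rfl, Nat.add_sub_cancel,
        show k + 2 = k + 2 from rfl, pow_succ, pow_succ]
      ring
    have : 1 ≤ 2 ^ (k + 2) := Nat.one_le_two_pow
    omega
  -- monotonicity beyond k+2
  have hmono : ∀ n, k + 2 ≤ n → H n ≤ H (n + 1) := by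
    intro n hn
    rw [hlong n hn]
    have hmem : n ∈ Finset.Ioc (n - k) n := by
      simp only [Finset.mem_Ioc]; omega
    calc H n ≤ ∑ j ∈ Finset.Ioc (n - k) n, H j :=
          Finset.single_le_sum (fun i _ => Nat.zero_le _) hmem
      _ ≤ _ := Nat.le_add_right _ _
  have hge : ∀ m, 2 * k + 3 ≤ m → H (2 * k + 3) ≤ H m := by
    intro m hm
    induction m with
    | zero => omega
    | succ p ih =>
      rcases Nat.lt_or_ge p (2 * k + 3) with hp | hp
      · have : p + 1 = 2 * k + 3 := by omega
        rw [this]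
      · exact le_trans (ih (by omega)) (hmono p (by omega))
  refine ⟨?_, hfail, brown⟩
  intro hc
  obtain ⟨s, hs1, hs2⟩ := hc (1 + ∑ i ∈ Finset.Icc 1 (2 * k + 2), H i) (by omega)
  have hsub : s ⊆ Finset.Icc 1 (2 * k + 2) := by
    intro i hi
    simp only [Finset.mem_Icc]
    refine ⟨hs1 i hi, ?_⟩
    by_contra hle
    push_neg at hle
    have h1i : H (2 * k + 3) ≤ H i := hge i (by omega)
    have h2i : H i ≤ ∑ j ∈ s, H j := Finset.single_le_sum (fun j _ => Nat.zero_le _) hi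
    omega
  have hle2 : (∑ i ∈ s, H i) ≤ ∑ i ∈ Finset.Icc 1 (2 * k + 2), H i :=
    Finset.sum_le_sum_of_subset hsub
  omega
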